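/- Let H be a complex Hilbert space, 𝒱 a closed subspace, and (V,v) = ((V_i, v_i))_{i∈I} a fusion Bessel sequence with every V_i ⊆ 𝒱, V_i ≠ {0}, and synthesis operator T_V. Let A and A_n (n ∈ ℕ) be bounded operators on H such that A is bijective with bounded inverse, ‖A_n − A‖ → 0, and A(𝒱) ⊆ 𝒱 and A_n(𝒱) ⊆ 𝒱 for all n. Let ṽ = (ṽ_i)_{i∈I} be weights and δ > 0 with δ ≤ v_i/ṽ_i for all i ∈ I. Then there exists n₀ ∈ ℕ such that for every n ≥ n₀: each A_n(V_i) is a closed subspace of 𝒱 and (A_n(V_i), ṽ_i)_{i∈I} is a fusion Bessel sequence for 𝒱, i.e., there is a constant C with Σ_{i∈I} ṽ_i² ‖π_{A_n(V_i)} f‖² ≤ C ‖f‖² for all f ∈ H. -/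

import Mathlib

open scoped ENNReal NNReal InnerProductSpace
set_option synthInstance.maxHeartbeats 1000000
set_option maxHeartbeats 1000000
noncomputable section

section FusionAux

variable {H : Type*} [NormedAddCommGroup H] [InnerProductSpace ℂ H] [CompleteSpace H]

omit [CompleteSpace H] in
lemma aux_inner_proj_self (K : Submodule ℂ H) [CompleteSpace K] (f : H) :
    ⟪(Submodule.orthogonalProjectionOnto K f : H), f⟫_ℂ =
      ((‖(Submodule.orthogonalProjectionOnto K f : H)‖ : ℂ)) ^ 2 := by
  have h := Submodule.inner_orthogonalProjectionOnto_eq_of_mem_left (K := K) (Submodule.orthogonalProjectionOnto K f) f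
  rw [← h, Submodule.coe_inner, inner_self_eq_norm_sq_to_K]
  rfl

lemma aux_proj_map_le (T : H →L[ℂ] H) (W : Submodule ℂ H) [CompleteSpace W]
    [CompleteSpace (Submodule.map (T : H →ₗ[ℂ] H) W)] {c : ℝ} (hc : 0 < c)
    (hlow : ∀ x : H, c * ‖x‖ ≤ ‖T x‖) (f : H) :
    ‖(Submodule.orthogonalProjectionOnto (Submodule.map (T : H →ₗ[ℂ] H) W) f : H)‖ ≤
      c⁻¹ * ‖(Submodule.orthogonalProjectionOnto W (ContinuousLinearMap.adjoint T f) : H)‖ := by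
  set M := Submodule.map (T : H →ₗ[ℂ] H) W with hM
  set p : H := (Submodule.orthogonalProjectionOnto M f : H) with hp
  set g : H := ContinuousLinearMap.adjoint T f with hg
  set q : H := (Submodule.orthogonalProjectionOnto W g : H) with hq
  obtain ⟨x, hxW, hTx⟩ := Submodule.mem_map.mp (SetLike.coe_mem (Submodule.orthogonalProjectionOnto M f))
  replace hTx : T x = _ := hTx
  have h1 : ⟪p, f⟫_ℂ = ((‖p‖ : ℂ)) ^ 2 := aux_inner_proj_self M f
  have h2 : ⟪p, f⟫_ℂ = ⟪x, q⟫_ℂ := by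
    rw [hp, ← hTx, ← ContinuousLinearMap.adjoint_inner_right, ← hg]
    have hz : ⟪x, g - q⟫_ℂ = 0 :=
      Submodule.inner_right_of_mem_orthogonal hxW
        (Submodule.sub_starProjection_mem_orthogonal g)
    rw [inner_sub_right] at hz
    linear_combination hz
  have key : ‖p‖ ^ 2 ≤ ‖x‖ * ‖q‖ := by
    have hre : (⟪p, f⟫_ℂ).re = ‖p‖ ^ 2 := by simp [h1, ← Complex.ofReal_pow]
    have := re_inner_le_norm (𝕜 := ℂ) x q
    rw [← hre, h2]
    exact this
  have hx : ‖x‖ ≤ c⁻¹ * ‖p‖ := by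
    have := hlow x
    rw [hTx] at this
    rw [inv_mul_eq_div, le_div_iff₀ hc]
    linarith
  rcases eq_or_lt_of_le (norm_nonneg p) with h0 | h0
  · rw [← h0]; positivity
  · have : ‖p‖ ^ 2 ≤ c⁻¹ * ‖p‖ * ‖q‖ := by
      calc ‖p‖ ^ 2 ≤ ‖x‖ * ‖q‖ := key
      _ ≤ c⁻¹ * ‖p‖ * ‖q‖ := mul_le_mul_of_nonneg_right hx (norm_nonneg q)
    have hcinv : (0:ℝ) < c⁻¹ := by positivity
    nlinarith

omit [CompleteSpace H] in
lemma aux_bessel {I : Type*} (V : I → Submodule ℂ H) [∀ i, CompleteSpace (V i)]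
    (v : I → ℝ)
    (TV : lp (fun i => V i) 2 →L[ℂ] H)
    (hTV : ∀ g : lp (fun i => V i) 2, HasSum (fun i => (v i : ℂ) • (g i : H)) (TV g))
    (f : H) (S : Finset I) :
    ∑ i ∈ S, (v i) ^ 2 * ‖(Submodule.orthogonalProjectionOnto (V i) f : H)‖ ^ 2 ≤ (‖TV‖ * ‖f‖) ^ 2 := by
  classical
  set s : ℝ := ∑ i ∈ S, (v i) ^ 2 * ‖(Submodule.orthogonalProjectionOnto (V i) f : H)‖ ^ 2 with hs
  have hs0 : 0 ≤ s := Finset.sum_nonneg fun i _ => by positivity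
  set cc : ∀ i, V i := fun i => (v i : ℂ) • (Submodule.orthogonalProjectionOnto (V i) f) with hcc
  set g : lp (fun i => V i) 2 := ∑ i ∈ S, lp.single 2 i (cc i) with hgdef
  have hgap : ∀ j, (g : ∀ i, V i) j = if j ∈ S then cc j else 0 := by
    intro j
    simp only [hgdef, lp.coeFn_sum, Finset.sum_apply, lp.single_apply, Pi.single, Function.update, Pi.zero_apply,
      Finset.sum_dite_eq, Finset.sum_dite_eq']
  have hnormcc : ∀ i, ‖cc i‖ ^ 2 = (v i) ^ 2 * ‖(Submodule.orthogonalProjectionOnto (V i) f : H)‖ ^ 2 := by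
    intro i
    have h1 : ‖cc i‖ = ‖(v i : ℂ)‖ * ‖Submodule.orthogonalProjectionOnto (V i) f‖ := norm_smul _ _
    rw [h1]
    have : ‖(v i : ℂ)‖ ^ 2 = (v i) ^ 2 := by
      rw [Complex.norm_real]; exact sq_abs _
    have h2 : ‖Submodule.orthogonalProjectionOnto (V i) f‖ = ‖(Submodule.orthogonalProjectionOnto (V i) f : H)‖ := rfl
    rw [mul_pow, this, h2]
  have hnormg : ‖g‖ ^ 2 = s := by
    have h := lp.norm_sum_single (p := 2) (by norm_num) cc S
    have h2 : ((2:ℝ≥0∞)).toReal = (2:ℝ) := by norm_num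
    rw [h2] at h
    rw [hs]
    calc ‖g‖ ^ 2 = ‖g‖ ^ (2:ℝ) := by rw [Real.rpow_two]
    _ = ∑ i ∈ S, ‖cc i‖ ^ (2:ℝ) := by rw [← hgdef] at h; exact h
    _ = ∑ i ∈ S, (v i) ^ 2 * ‖(Submodule.orthogonalProjectionOnto (V i) f : H)‖ ^ 2 := by
        refine Finset.sum_congr rfl fun i _ => ?_
        rw [Real.rpow_two, hnormcc i]
  have hTVg : TV g = ∑ i ∈ S, (v i : ℂ) • ((cc i : H)) := by
    have h : HasSum (fun i => (v i : ℂ) • (((g : ∀ i, V i) i : V i) : H))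
        (∑ i ∈ S, (v i : ℂ) • (((g : ∀ i, V i) i : V i) : H)) := by
      refine hasSum_sum_of_ne_finset_zero fun b hb => ?_
      show (v b : ℂ) • (((g : ∀ i, V i) b : V b) : H) = 0
      rw [hgap b, if_neg hb]
      simp
    rw [(hTV g).unique h]
    refine Finset.sum_congr rfl fun i hi => ?_
    rw [hgap i, if_pos hi]
  have hip : ⟪TV g, f⟫_ℂ = (s : ℂ) := by
    rw [hTVg, sum_inner, hs]
    push_cast
    refine Finset.sum_congr rfl fun i hi => ?_
    rw [hcc]
    simp only [Submodule.coe_smul]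
    rw [inner_smul_left, inner_smul_left, aux_inner_proj_self (V i) f]
    simp [Complex.conj_ofReal]
    ring
  have hb1 : s ≤ ‖TV‖ * ‖g‖ * ‖f‖ := by
    have h := norm_inner_le_norm (𝕜 := ℂ) (TV g) f
    rw [hip] at h
    rw [Complex.norm_real, Real.norm_eq_abs, abs_of_nonneg hs0] at h
    calc s ≤ ‖TV g‖ * ‖f‖ := h
    _ ≤ ‖TV‖ * ‖g‖ * ‖f‖ :=
        mul_le_mul_of_nonneg_right (TV.le_opNorm g) (norm_nonneg f)
  nlinarith [norm_nonneg g, norm_nonneg (TV : lp (fun i => V i) 2 →L[ℂ] H), norm_nonneg f,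
    mul_nonneg (norm_nonneg (TV : lp (fun i => V i) 2 →L[ℂ] H)) (norm_nonneg f), hnormg, hb1,
    sq_nonneg (‖TV‖ * ‖f‖ - ‖g‖)]

end FusionAux

/-- If `(V,v)` is a fusion Bessel sequence inside `𝒱`, `A` is invertible with `A(𝒱) ⊆ 𝒱`,
`A_n → A` in norm with `A_n(𝒱) ⊆ 𝒱`, and `δ ≤ v i / ṽ i`, then for all large `n` the family
`(A_n(V_i), ṽ_i)` is a fusion Bessel sequence for `𝒱`. -/
theorem fusionBessel_of_norm_tendsto
    {H : Type*} [NormedAddCommGroup H] [InnerProductSpace ℂ H] [CompleteSpace H]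
    {I : Type*} [Countable I]
    (𝒱 : Submodule ℂ H) [CompleteSpace 𝒱]
    (V : I → Submodule ℂ H) [∀ i, CompleteSpace (V i)]
    (hV : ∀ i, V i ≤ 𝒱) (hVne : ∀ i, V i ≠ ⊥)
    (v : I → ℝ) (hv : ∀ i, 0 < v i)
    (TV : lp (fun i => V i) 2 →L[ℂ] H)
    (hTV : ∀ g : lp (fun i => V i) 2, HasSum (fun i => (v i : ℂ) • (g i : H)) (TV g))
    -- `A` bijective on `H` with bounded inverse, `A_n → A` in operator norm
    (A : H ≃L[ℂ] H) (An : ℕ → (H →L[ℂ] H))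
    (hAn : Filter.Tendsto (fun n => ‖An n - (A : H →L[ℂ] H)‖) Filter.atTop (nhds 0))
    (hA𝒱 : ∀ x ∈ 𝒱, A x ∈ 𝒱) (hAn𝒱 : ∀ n, ∀ x ∈ 𝒱, An n x ∈ 𝒱)
    (vt : I → ℝ) (hvt : ∀ i, 0 < vt i)
    (δ : ℝ) (hδ : 0 < δ) (hδle : ∀ i, δ ≤ v i / vt i) :
    ∃ n₀ : ℕ, ∀ n ≥ n₀,
      ∃ hcl : ∀ i, IsClosed ((Submodule.map (An n : H →ₗ[ℂ] H) (V i) : Submodule ℂ H) : Set H),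
        (∀ i, Submodule.map (An n : H →ₗ[ℂ] H) (V i) ≤ 𝒱) ∧
        ∃ C : ℝ, ∀ f : H,
          haveI : ∀ i, CompleteSpace (Submodule.map (An n : H →ₗ[ℂ] H) (V i) : Submodule ℂ H) :=
            fun i => (hcl i).completeSpace_coe
          (Summable fun i =>
              (vt i) ^ 2 * ‖(Submodule.orthogonalProjectionOnto (Submodule.map (An n : H →ₗ[ℂ] H) (V i)) f : H)‖ ^ 2) ∧
          ∑' i, (vt i) ^ 2 * ‖(Submodule.orthogonalProjectionOnto (Submodule.map (An n : H →ₗ[ℂ] H) (V i)) f : H)‖ ^ 2 ≤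
            C * ‖f‖ ^ 2 := by
  classical
  set B : ℝ := ‖(A.symm : H →L[ℂ] H)‖ + 1 with hB
  have hB0 : 0 < B := by positivity
  set c : ℝ := (2 * B)⁻¹ with hcdef
  have hc : 0 < c := by positivity
  have hev : ∀ᶠ n in Filter.atTop, ‖An n - (A : H →L[ℂ] H)‖ < c :=
    hAn.eventually_lt_const hc
  obtain ⟨n₀, hn₀⟩ := Filter.eventually_atTop.mp hev
  refine ⟨n₀, fun n hn => ?_⟩
  -- lower bound for `An n`
  have hlow : ∀ x : H, c * ‖x‖ ≤ ‖An n x‖ := by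
    intro x
    have h1 : ‖x‖ ≤ B * ‖A x‖ := by
      calc ‖x‖ = ‖A.symm (A x)‖ := by simp
      _ ≤ ‖(A.symm : H →L[ℂ] H)‖ * ‖A x‖ := (A.symm : H →L[ℂ] H).le_opNorm _
      _ ≤ B * ‖A x‖ := by
          have := norm_nonneg (A x)
          nlinarith
    have h2 : ‖A x - An n x‖ ≤ c * ‖x‖ := by
      calc ‖A x - An n x‖ = ‖(An n - (A : H →L[ℂ] H)) x‖ := by
            rw [ContinuousLinearMap.sub_apply, norm_sub_rev]
            rfl
      _ ≤ ‖An n - (A : H →L[ℂ] H)‖ * ‖x‖ := (An n - (A : H →L[ℂ] H)).le_opNorm x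
      _ ≤ c * ‖x‖ := mul_le_mul_of_nonneg_right (hn₀ n hn).le (norm_nonneg x)
    have h3 : ‖A x‖ - ‖A x - An n x‖ ≤ ‖An n x‖ := by
      have := norm_sub_norm_le (A x) (An n x)
      have h4 : ‖A x‖ - ‖An n x‖ ≤ ‖A x - An n x‖ := by
        simpa using norm_sub_norm_le (A x) (An n x)
      linarith
    have h5 : B⁻¹ * ‖x‖ ≤ ‖A x‖ := by
      rw [inv_mul_eq_div, div_le_iff₀ hB0]
      linarith [h1, norm_nonneg (A x)]
    have hceq : B⁻¹ - c = c := by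
      rw [hcdef]
      field_simp
      ring
    nlinarith [norm_nonneg x]
  -- closedness
  have hcl : ∀ i, IsClosed ((Submodule.map (An n : H →ₗ[ℂ] H) (V i) : Submodule ℂ H) : Set H) := by
    intro i
    set T : V i →L[ℂ] H := (An n).comp (V i).subtypeL with hT
    have hbnd : ∀ x : V i, ‖x‖ ≤ (c.toNNReal⁻¹ : ℝ≥0) * ‖T x‖ := by
      intro x
      have h := hlow (x : H)
      have hco : ((c.toNNReal⁻¹ : ℝ≥0) : ℝ) = c⁻¹ := by
        rw [NNReal.coe_inv, Real.coe_toNNReal _ hc.le]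
      rw [hco]
      have hTx : T x = An n (x : H) := rfl
      rw [hTx]
      rw [inv_mul_eq_div, le_div_iff₀ hc]
      calc ‖x‖ * c = c * ‖(x : H)‖ := by rw [mul_comm]; rfl
      _ ≤ ‖An n (x : H)‖ := h
    have hanti := ContinuousLinearMap.antilipschitz_of_bound T hbnd
    have hce : Topology.IsClosedEmbedding T := hanti.isClosedEmbedding T.uniformContinuous
    have hrange : ((Submodule.map (An n : H →ₗ[ℂ] H) (V i) : Submodule ℂ H) : Set H) = Set.range T := by
      ext y
      constructor
      · rintro ⟨x, hxV, rfl⟩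
        exact ⟨⟨x, hxV⟩, rfl⟩
      · rintro ⟨x, rfl⟩
        exact ⟨(x : H), x.2, rfl⟩
    rw [hrange]
    exact hce.isClosed_range
  haveI instC : ∀ i, CompleteSpace (Submodule.map (An n : H →ₗ[ℂ] H) (V i) : Submodule ℂ H) :=
    fun i => (hcl i).completeSpace_coe
  refine ⟨hcl, fun i y hy => ?_, ?_⟩
  · obtain ⟨x, hxV, rfl⟩ := hy
    exact hAn𝒱 n x (hV i hxV)
  -- the Bessel bound
  set Tad : H →L[ℂ] H := ContinuousLinearMap.adjoint (An n) with hTad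
  set a : ℝ := c⁻¹ * δ⁻¹ with ha
  have ha0 : 0 < a := by positivity
  refine ⟨a ^ 2 * (‖TV‖ * ‖Tad‖) ^ 2, fun f => ?_⟩
  set gf : H := Tad f with hgf
  have hpt : ∀ i, (vt i) ^ 2 * ‖(Submodule.orthogonalProjectionOnto (Submodule.map (An n : H →ₗ[ℂ] H) (V i)) f : H)‖ ^ 2 ≤
      a ^ 2 * ((v i) ^ 2 * ‖(Submodule.orthogonalProjectionOnto (V i) gf : H)‖ ^ 2) := by
    intro i
    have h1 := aux_proj_map_le (An n) (V i) hc hlow f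
    have h2 : vt i ≤ δ⁻¹ * v i := by
      have := hδle i
      rw [le_div_iff₀ (hvt i)] at this
      rw [inv_mul_eq_div, le_div_iff₀ hδ]
      linarith
    have h3 : vt i * ‖(Submodule.orthogonalProjectionOnto (Submodule.map (An n : H →ₗ[ℂ] H) (V i)) f : H)‖ ≤
        (δ⁻¹ * v i) * (c⁻¹ * ‖(Submodule.orthogonalProjectionOnto (V i) gf : H)‖) :=
      mul_le_mul h2 h1 (norm_nonneg _) (mul_nonneg (by positivity) (hv i).le)
    have h4 := pow_le_pow_left₀ (mul_nonneg (hvt i).le (norm_nonneg _)) h3 2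
    calc (vt i) ^ 2 * ‖(Submodule.orthogonalProjectionOnto (Submodule.map (An n : H →ₗ[ℂ] H) (V i)) f : H)‖ ^ 2
        = (vt i * ‖(Submodule.orthogonalProjectionOnto (Submodule.map (An n : H →ₗ[ℂ] H) (V i)) f : H)‖) ^ 2 := by ring
    _ ≤ ((δ⁻¹ * v i) * (c⁻¹ * ‖(Submodule.orthogonalProjectionOnto (V i) gf : H)‖)) ^ 2 := h4
    _ = a ^ 2 * ((v i) ^ 2 * ‖(Submodule.orthogonalProjectionOnto (V i) gf : H)‖ ^ 2) := by
        rw [ha]; ring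
  have hbS : ∀ S : Finset I,
      ∑ i ∈ S, (v i) ^ 2 * ‖(Submodule.orthogonalProjectionOnto (V i) gf : H)‖ ^ 2 ≤ (‖TV‖ * ‖gf‖) ^ 2 :=
    fun S => aux_bessel V v TV hTV gf S
  have hsum0 : Summable fun i => (v i) ^ 2 * ‖(Submodule.orthogonalProjectionOnto (V i) gf : H)‖ ^ 2 :=
    summable_of_sum_le (fun i => by positivity) hbS
  have hsum1 : Summable fun i =>
      a ^ 2 * ((v i) ^ 2 * ‖(Submodule.orthogonalProjectionOnto (V i) gf : H)‖ ^ 2) := hsum0.mul_left _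
  have hsum : Summable fun i =>
      (vt i) ^ 2 * ‖(Submodule.orthogonalProjectionOnto (Submodule.map (An n : H →ₗ[ℂ] H) (V i)) f : H)‖ ^ 2 :=
    Summable.of_nonneg_of_le (fun i => by positivity) hpt hsum1
  refine ⟨hsum, ?_⟩
  have htsum1 : ∑' i, (v i) ^ 2 * ‖(Submodule.orthogonalProjectionOnto (V i) gf : H)‖ ^ 2 ≤
      (‖TV‖ * ‖gf‖) ^ 2 := Summable.tsum_le_of_sum_le hsum0 hbS
  have hgfle : ‖gf‖ ≤ ‖Tad‖ * ‖f‖ := Tad.le_opNorm f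
  calc ∑' i, (vt i) ^ 2 * ‖(Submodule.orthogonalProjectionOnto (Submodule.map (An n : H →ₗ[ℂ] H) (V i)) f : H)‖ ^ 2
      ≤ ∑' i, a ^ 2 * ((v i) ^ 2 * ‖(Submodule.orthogonalProjectionOnto (V i) gf : H)‖ ^ 2) :=
        Summable.tsum_le_tsum hpt hsum hsum1
  _ = a ^ 2 * ∑' i, (v i) ^ 2 * ‖(Submodule.orthogonalProjectionOnto (V i) gf : H)‖ ^ 2 := tsum_mul_left
  _ ≤ a ^ 2 * (‖TV‖ * ‖gf‖) ^ 2 := mul_le_mul_of_nonneg_left htsum1 (by positivity)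
  _ ≤ a ^ 2 * (‖TV‖ * (‖Tad‖ * ‖f‖)) ^ 2 := by
      have h5 : ‖TV‖ * ‖gf‖ ≤ ‖TV‖ * (‖Tad‖ * ‖f‖) :=
        mul_le_mul_of_nonneg_left hgfle (norm_nonneg TV)
      have h6 := pow_le_pow_left₀ (by positivity) h5 2
      exact mul_le_mul_of_nonneg_left h6 (by positivity)
  _ = a ^ 2 * (‖TV‖ * ‖Tad‖) ^ 2 * ‖f‖ ^ 2 := by ring
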